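/- arXiv:0905.0305 — 3 statements merged into one kernel-verified Lean document; each statement's English description precedes it below -/
import Mathlib

section
/- Let F be a countable family of homeomorphisms of a second-countable Baire space X such that for every x in some residual F-invariant set R, the semigroup orbit of x is dense. Then for each x ∈ R there is a branch of an orbit of the iterated function system IFS(F) starting at x which is dense in X; in particular IFS(F) is transitive. -/
open Set

/-- If `F` is a countable family of homeomorphisms of a second-countable Baire
space `X`, `R` a residual `F`-invariant set such that every `x ∈ R` has dense semigroup
orbit, then from every `x ∈ R` there starts a branch of an orbit of `IFS(F)` (a sequence
`o` with `o 0 = x` and `o (n+1) = f_n (o n)` with `f_n ∈ F`) which is dense in `X`;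
in particular `IFS(F)` is transitive. -/
theorem exists_dense_branch_from_residual
    {X : Type*} [TopologicalSpace X] [SecondCountableTopology X] [BaireSpace X]
    (F : Set (Equiv.Perm X))
    (hFcont : ∀ f ∈ F, Continuous f ∧ Continuous f.symm)
    (hFcount : F.Countable)
    (R : Set X) (hR : R ∈ residual X)
    (hinv : ∀ f ∈ F, (f : Equiv.Perm X) '' R = R)
    (hdense : ∀ x ∈ R,
      Dense {y | ∃ f ∈ Subsemigroup.closure F, (f : Equiv.Perm X) x = y}) :
    ∀ x ∈ R, ∃ o : ℕ → X, o 0 = x ∧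
      (∀ n, ∃ f ∈ F, o (n + 1) = (f : Equiv.Perm X) (o n)) ∧
      Dense (Set.range o) := by
  intro x hx
  -- each f ∈ F maps R into R
  have hmapsto : ∀ f ∈ F, ∀ z ∈ R, (f : Equiv.Perm X) z ∈ R := by
    intro f hf z hz
    have h := hinv f hf
    rw [← h]
    exact ⟨z, hz, rfl⟩
  -- elements of the semigroup closure are nonempty products of elements of F
  have hword : ∀ g ∈ Subsemigroup.closure F,
      ∃ L : List (Equiv.Perm X), L ≠ [] ∧ (∀ f ∈ L, f ∈ F) ∧ g = L.prod := by
    intro g hg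
    induction hg using Subsemigroup.closure_induction with
    | mem f hf => exact ⟨[f], by simp, by simpa using hf, by simp⟩
    | mul a b ha hb iha ihb =>
      obtain ⟨L, hLne, hLF, rfl⟩ := iha
      obtain ⟨M, hMne, hMF, rfl⟩ := ihb
      refine ⟨L ++ M, by simp [hLne], ?_, (List.prod_append).symm⟩
      intro f hf
      rcases List.mem_append.1 hf with h | h
      · exact hLF f h
      · exact hMF f h
  -- chains realizing a word, starting at a point of R and staying in R
  have hchain : ∀ L : List (Equiv.Perm X), (∀ f ∈ L, f ∈ F) → ∀ y ∈ R,
      ∃ c : ℕ → X, c 0 = y ∧ (∀ i < L.length, ∃ f ∈ F, c (i + 1) = f (c i)) ∧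
        c L.length = L.prod y ∧ (∀ i ≤ L.length, c i ∈ R) := by
    intro L
    induction L with
    | nil =>
      intro _ y hy
      exact ⟨fun _ => y, rfl, by simp, by simp, fun i _ => hy⟩
    | cons a t ih =>
      intro hF y hy
      have haF : a ∈ F := hF a List.mem_cons_self
      obtain ⟨c, hc0, hcs, hce, hcR⟩ := ih (fun f hf => hF f (List.mem_cons_of_mem _ hf)) y hy
      refine ⟨fun i => if i ≤ t.length then c i else a (c t.length), ?_, ?_, ?_, ?_⟩
      · simp [hc0]
      · intro i hi
        simp only [List.length_cons] at hi
        by_cases h : i < t.length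
        · obtain ⟨f, hf, hfe⟩ := hcs i h
          refine ⟨f, hf, ?_⟩
          simp only [if_pos (by omega : i + 1 ≤ t.length), if_pos (by omega : i ≤ t.length)]
          exact hfe
        · have hie : i = t.length := by omega
          subst hie
          refine ⟨a, haF, ?_⟩
          simp only [if_neg (show ¬ t.length + 1 ≤ t.length by omega), if_pos (le_refl t.length)]
      · simp only [List.length_cons, if_neg (by omega : ¬ t.length + 1 ≤ t.length)]
        rw [hce, List.prod_cons, Equiv.Perm.mul_apply]
      · intro i hi
        by_cases h : i ≤ t.length
        · simpa [if_pos h] using hcR i h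
        · simp only [if_neg h]
          exact hmapsto a haF _ (hcR t.length le_rfl)
  -- countable basis
  obtain ⟨b, hbc, hbne, hbb⟩ := TopologicalSpace.exists_countable_basis X
  have hbnonempty : b.Nonempty := by
    have hxu : x ∈ ⋃₀ b := by rw [hbb.sUnion_eq]; trivial
    obtain ⟨B, hB, -⟩ := hxu
    exact ⟨B, hB⟩
  obtain ⟨V, hV⟩ := Set.Countable.exists_eq_range hbc hbnonempty
  -- key step: from any point of R there is a chain into V n staying in R
  have key : ∀ (n : ℕ) (y : {z // z ∈ R}), ∃ p : ℕ × (ℕ → X), 1 ≤ p.1 ∧ p.2 0 = y.1 ∧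
      (∀ i < p.1, ∃ f ∈ F, p.2 (i + 1) = f (p.2 i)) ∧ p.2 p.1 ∈ V n ∧
      ∀ i ≤ p.1, p.2 i ∈ R := by
    intro n y
    have hVn : V n ∈ b := by rw [hV]; exact mem_range_self n
    have hopen : IsOpen (V n) := hbb.isOpen hVn
    have hne : (V n).Nonempty := by
      rw [Set.nonempty_iff_ne_empty]
      intro h
      exact hbne (h ▸ hVn)
    obtain ⟨z, hz, hzU⟩ := (hdense y.1 y.2).exists_mem_open hopen hne
    obtain ⟨g, hg, hgy⟩ := hz
    obtain ⟨L, hLne, hLF, rfl⟩ := hword g hg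
    obtain ⟨c, hc0, hcs, hce, hcR⟩ := hchain L hLF y.1 y.2
    exact ⟨(L.length, c), List.length_pos_iff.2 hLne, hc0, hcs, by show c L.length ∈ V n; rw [hce, hgy]; exact hzU, hcR⟩
  choose P hP1 hP0 hPs hPV hPR using key
  -- sequence of segment starting points
  set q : ℕ → {z // z ∈ R} :=
    fun n => Nat.rec ⟨x, hx⟩ (fun n y => ⟨(P n y).2 (P n y).1, hPR n y _ le_rfl⟩) n with hq
  have hq0 : q 0 = ⟨x, hx⟩ := rfl
  have hqs : ∀ n, (q (n + 1)).1 = (P n (q n)).2 (P n (q n)).1 := fun n => rfl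
  -- cumulative lengths
  set cum : ℕ → ℕ := fun n => Nat.rec 0 (fun n m => m + (P n (q n)).1) n with hcum
  have hcum0 : cum 0 = 0 := rfl
  have hcums : ∀ n, cum (n + 1) = cum n + (P n (q n)).1 := fun n => rfl
  have hcmono : StrictMono cum := by
    apply strictMono_nat_of_lt_succ
    intro n
    have := hP1 n (q n)
    have h := hcums n
    omega
  have hcge : ∀ n, n ≤ cum n := by
    intro n
    induction n with
    | zero => omega
    | succ n ih => have := hP1 n (q n); have h := hcums n; omega
  have hex : ∀ m : ℕ, ∃ n, m < cum (n + 1) := by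
    intro m
    exact ⟨m, lt_of_lt_of_le (Nat.lt_succ_self m) (hcge (m + 1))⟩
  set idx : ℕ → ℕ := fun m => Nat.find (hex m) with hidxdef
  have hidx : ∀ m n, cum n ≤ m → m < cum (n + 1) → idx m = n := by
    intro m n h1 h2
    rw [hidxdef]
    rw [Nat.find_eq_iff]
    refine ⟨h2, fun k hk => ?_⟩
    have hkk : k + 1 ≤ n := hk
    have : cum (k + 1) ≤ cum n := hcmono.monotone hkk
    omega
  have hidx_lt : ∀ m, m < cum (idx m + 1) := fun m => Nat.find_spec (hex m)
  have hidx_le : ∀ m, cum (idx m) ≤ m := by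
    intro m
    rcases Nat.eq_zero_or_pos (idx m) with h | h
    · rw [h, hcum0]; omega
    · have := Nat.find_min (hex m) (show idx m - 1 < idx m by omega)
      have he : idx m - 1 + 1 = idx m := by omega
      rw [he] at this
      omega
  -- the branch
  set o : ℕ → X := fun m => (P (idx m) (q (idx m))).2 (m - cum (idx m)) with ho
  have hidx0 : idx 0 = 0 := by
    apply hidx 0 0 (by omega)
    have := hP1 0 (q 0)
    have h := hcums 0
    omega
  have ho0 : o 0 = x := by
    simp only [ho, hidx0, hcum0, Nat.sub_zero]
    rw [hP0 0 (q 0), hq0]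
  refine ⟨o, ho0, ?_, ?_⟩
  · -- chain property
    intro m
    set n := idx m with hn
    have h1 : cum n ≤ m := hidx_le m
    have h2 : m < cum (n + 1) := hidx_lt m
    have hkn : cum (n + 1) = cum n + (P n (q n)).1 := hcums n
    have hj : m - cum n < (P n (q n)).1 := by omega
    obtain ⟨f, hf, hfe⟩ := hPs n (q n) (m - cum n) hj
    refine ⟨f, hf, ?_⟩
    have hgoal : o (m + 1) = (P n (q n)).2 (m - cum n + 1) := by
      by_cases hcase : m + 1 < cum (n + 1)
      · have hidx1 : idx (m + 1) = n := hidx (m + 1) n (by omega) hcase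
        simp only [ho, hidx1]
        have harg : m + 1 - cum n = m - cum n + 1 := by omega
        rw [harg]
      · have hm1 : m + 1 = cum (n + 1) := by omega
        have hidx1 : idx (m + 1) = n + 1 := by
          apply hidx (m + 1) (n + 1) (by omega)
          have := hP1 (n + 1) (q (n + 1))
          have h := hcums (n + 1)
          omega
        simp only [ho, hidx1]
        have hsub : m + 1 - cum (n + 1) = 0 := by omega
        rw [hsub, hP0 (n + 1) (q (n + 1)), hqs n]
        have harg : m - cum n + 1 = (P n (q n)).1 := by omega
        rw [harg]
    rw [hgoal, hfe]
  · -- density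
    rw [hbb.dense_iff]
    intro B hB hBne
    rw [hV] at hB
    obtain ⟨n, rfl⟩ := hB
    refine ⟨(P n (q n)).2 (P n (q n)).1, hPV n (q n), ?_⟩
    refine ⟨cum (n + 1), ?_⟩
    have hidx1 : idx (cum (n + 1)) = n + 1 := by
      apply hidx _ (n + 1) le_rfl
      have := hP1 (n + 1) (q (n + 1))
      have h := hcums (n + 1)
      omega
    simp only [ho, hidx1, Nat.sub_self]
    rw [hP0 (n + 1) (q (n + 1)), hqs n]
end

section
/- Let K₁ and K₂ be disjoint continua in the unit square Q = [0,1]², each crossing Q horizontally (separating the two horizontal sides of Q). If for some x ∈ [0,1] the maximum height of K₁ on the vertical segment {x}×[0,1] is less than that of K₂, then K₂ is entirely contained in the connected component of Q ∖ K₁ containing the top side [0,1]×{1}; consequently the same height inequality holds for every x' ∈ [0,1]. -/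
open Set Metric

/-- The unit square `Q = [0,1]²`. -/
def unitSq : Set (ℝ × ℝ) := Icc (0:ℝ) 1 ×ˢ Icc (0:ℝ) 1

/-- The bottom horizontal side of `Q`. -/
def botSide : Set (ℝ × ℝ) := Icc (0:ℝ) 1 ×ˢ {(0:ℝ)}

/-- The top horizontal side of `Q`. -/
def topSide : Set (ℝ × ℝ) := Icc (0:ℝ) 1 ×ˢ {(1:ℝ)}

/-- A continuum `K ⊆ Q` crosses the unit square horizontally: the two horizontal sides of
`Q` lie in different connected components of `Q ∖ K`. -/
def CrossesHorizontally (K : Set (ℝ × ℝ)) : Prop :=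
  IsCompact K ∧ IsConnected K ∧ K ⊆ unitSq ∧ Disjoint K (botSide ∪ topSide) ∧
  ∀ p ∈ botSide, ∀ q ∈ topSide,
    connectedComponentIn (unitSq \ K) p ≠ connectedComponentIn (unitSq \ K) q

/-- The maximal height of `K` over the vertical segment `{x} × [0,1]`. -/
noncomputable def maxHt (K : Set (ℝ × ℝ)) (x : ℝ) : ℝ := sSup {y : ℝ | (x, y) ∈ K}

lemma convex_unitSq : Convex ℝ unitSq := (convex_Icc _ _).prod (convex_Icc _ _)
lemma isClosed_unitSq : IsClosed unitSq := isClosed_Icc.prod isClosed_Icc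
lemma isPreconnected_unitSq : IsPreconnected unitSq := convex_unitSq.isPreconnected

variable {K : Set (ℝ × ℝ)}

lemma bot_mem (h : CrossesHorizontally K) {x : ℝ} (hx : x ∈ Icc (0:ℝ) 1) :
    (x, (0:ℝ)) ∈ unitSq \ K := by
  refine ⟨⟨hx, le_refl 0, zero_le_one⟩, fun hK => ?_⟩
  exact Set.disjoint_left.mp h.2.2.2.1 hK (Or.inl ⟨hx, rfl⟩)

lemma top_mem (h : CrossesHorizontally K) {x : ℝ} (hx : x ∈ Icc (0:ℝ) 1) :
    (x, (1:ℝ)) ∈ unitSq \ K := by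
  refine ⟨⟨hx, zero_le_one, le_refl 1⟩, fun hK => ?_⟩
  exact Set.disjoint_left.mp h.2.2.2.1 hK (Or.inr ⟨hx, rfl⟩)

lemma heights_bdd (h : CrossesHorizontally K) {x : ℝ} : BddAbove {y : ℝ | (x, y) ∈ K} :=
  ⟨1, fun y hy => (h.2.2.1 hy).2.2⟩

lemma heights_nonempty (h : CrossesHorizontally K) {x : ℝ} (hx : x ∈ Icc (0:ℝ) 1) :
    {y : ℝ | (x, y) ∈ K}.Nonempty := by
  by_contra hne
  rw [Set.not_nonempty_iff_eq_empty] at hne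
  have hseg : ({x} ×ˢ Icc (0:ℝ) 1) ⊆ unitSq \ K := by
    rintro ⟨a, b⟩ ⟨ha, hb⟩
    obtain rfl : x = a := ha.symm
    refine ⟨⟨hx, hb⟩, fun hK => ?_⟩
    have : b ∈ {y : ℝ | (x, y) ∈ K} := hK
    simp [hne] at this
  have hconn : IsPreconnected ({x} ×ˢ Icc (0:ℝ) 1) :=
    ((convex_singleton x).prod (convex_Icc 0 1)).isPreconnected
  have h0 : (x, (0:ℝ)) ∈ ({x} ×ˢ Icc (0:ℝ) 1) := ⟨rfl, le_refl 0, zero_le_one⟩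
  have hsub := hconn.subset_connectedComponentIn h0 hseg
  have h1mem : (x, (1:ℝ)) ∈ connectedComponentIn (unitSq \ K) (x, (0:ℝ)) :=
    hsub ⟨rfl, zero_le_one, le_refl 1⟩
  exact h.2.2.2.2 (x, 0) ⟨hx, rfl⟩ (x, 1) ⟨hx, rfl⟩ (connectedComponentIn_eq h1mem)

lemma maxHt_mem (h : CrossesHorizontally K) {x : ℝ} (hx : x ∈ Icc (0:ℝ) 1) :
    (x, maxHt K x) ∈ K := by
  have hcl : IsClosed {y : ℝ | (x, y) ∈ K} :=
    h.1.isClosed.preimage (Continuous.prodMk_right x)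
  exact hcl.csSup_mem (heights_nonempty h hx) (heights_bdd h)

lemma maxHt_nonneg (h : CrossesHorizontally K) {x : ℝ} (hx : x ∈ Icc (0:ℝ) 1) :
    0 ≤ maxHt K x := (h.2.2.1 (maxHt_mem h hx)).2.1

lemma maxHt_le_one (h : CrossesHorizontally K) {x : ℝ} (hx : x ∈ Icc (0:ℝ) 1) :
    maxHt K x ≤ 1 := (h.2.2.1 (maxHt_mem h hx)).2.2

lemma mem_topComp (h : CrossesHorizontally K) {x : ℝ} (hx : x ∈ Icc (0:ℝ) 1)
    {y : ℝ} (hy : maxHt K x < y) (hy1 : y ≤ 1) :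
    (x, y) ∈ connectedComponentIn (unitSq \ K) ((0:ℝ), (1:ℝ)) := by
  have h0y : 0 ≤ y := le_trans (maxHt_nonneg h hx) hy.le
  have hseg : ({x} ×ˢ Icc y 1) ⊆ unitSq \ K := by
    rintro ⟨a, b⟩ ⟨ha, hb⟩
    obtain rfl : x = a := ha.symm
    refine ⟨⟨hx, le_trans h0y hb.1, hb.2⟩, fun hK => ?_⟩
    have : b ≤ maxHt K x := le_csSup (heights_bdd h) hK
    linarith [hb.1]
  have hconn : IsPreconnected ({x} ×ˢ Icc y 1) :=
    ((convex_singleton x).prod (convex_Icc y 1)).isPreconnected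
  have h1m : (x, (1:ℝ)) ∈ ({x} ×ˢ Icc y 1) := ⟨rfl, hy1, le_refl 1⟩
  have hsub := hconn.subset_connectedComponentIn h1m hseg
  have hxy : (x, y) ∈ connectedComponentIn (unitSq \ K) (x, (1:ℝ)) :=
    hsub ⟨rfl, le_refl y, hy1⟩
  have htopsub : topSide ⊆ unitSq \ K := by
    rintro ⟨a, b⟩ ⟨ha, hb⟩
    obtain rfl : b = 1 := hb
    exact top_mem h ha
  have htconn : IsPreconnected topSide :=
    ((convex_Icc (0:ℝ) 1).prod (convex_singleton (1:ℝ))).isPreconnected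
  have hxt : (x, (1:ℝ)) ∈ topSide := ⟨hx, rfl⟩
  have h0t : ((0:ℝ), (1:ℝ)) ∈ topSide := ⟨⟨le_refl 0, zero_le_one⟩, rfl⟩
  have h01 : ((0:ℝ), (1:ℝ)) ∈ connectedComponentIn (unitSq \ K) (x, (1:ℝ)) :=
    htconn.subset_connectedComponentIn hxt htopsub h0t
  rw [connectedComponentIn_eq h01] at hxy
  exact hxy

lemma ball_subset_comp (h : CrossesHorizontally K) {z : ℝ × ℝ} (hz : z ∈ unitSq \ K) :
    ∃ ε > 0, ball z ε ∩ unitSq ⊆ connectedComponentIn (unitSq \ K) z := by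
  obtain ⟨ε, hε, hball⟩ := Metric.isOpen_iff.mp h.1.isClosed.isOpen_compl z hz.2
  refine ⟨ε, hε, ?_⟩
  have hconv : Convex ℝ (ball z ε ∩ unitSq) := (convex_ball _ _).inter convex_unitSq
  have hsub : ball z ε ∩ unitSq ⊆ unitSq \ K := fun p hp => ⟨hp.2, hball hp.1⟩
  exact hconv.isPreconnected.subset_connectedComponentIn ⟨mem_ball_self hε, hz.1⟩ hsub

lemma closure_comp_subset (h : CrossesHorizontally K) {z₀ : ℝ × ℝ} :
    closure (connectedComponentIn (unitSq \ K) z₀) ⊆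
      connectedComponentIn (unitSq \ K) z₀ ∪ K := by
  intro z hz
  by_cases hzK : z ∈ K
  · exact Or.inr hzK
  left
  have hQ : closure (connectedComponentIn (unitSq \ K) z₀) ⊆ unitSq :=
    closure_minimal ((connectedComponentIn_subset _ _).trans diff_subset) isClosed_unitSq
  have hzd : z ∈ unitSq \ K := ⟨hQ hz, hzK⟩
  obtain ⟨ε, hε, hsub⟩ := ball_subset_comp h hzd
  obtain ⟨w, hwC, hwd⟩ := Metric.mem_closure_iff.mp hz ε hε
  have hwQ : w ∈ unitSq := ((connectedComponentIn_subset _ _) hwC).1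
  have hw : w ∈ connectedComponentIn (unitSq \ K) z :=
    hsub ⟨Metric.mem_ball'.mpr hwd, hwQ⟩
  have e1 := connectedComponentIn_eq hw
  have e2 := connectedComponentIn_eq hwC
  have : z ∈ connectedComponentIn (unitSq \ K) z := mem_connectedComponentIn hzd
  rw [e1, ← e2] at this
  exact this

lemma comp_ne (h : CrossesHorizontally K) :
    connectedComponentIn (unitSq \ K) ((0:ℝ), (0:ℝ)) ≠
      connectedComponentIn (unitSq \ K) ((0:ℝ), (1:ℝ)) :=
  h.2.2.2.2 (0, 0) ⟨⟨le_refl 0, zero_le_one⟩, rfl⟩ (0, 1) ⟨⟨le_refl 0, zero_le_one⟩, rfl⟩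

lemma closure_meets (h : CrossesHorizontally K) :
    (closure (connectedComponentIn (unitSq \ K) ((0:ℝ), (0:ℝ))) ∩ K).Nonempty := by
  set B := connectedComponentIn (unitSq \ K) ((0:ℝ), (0:ℝ)) with hB
  by_contra hne
  rw [Set.not_nonempty_iff_eq_empty] at hne
  set V₁ : Set (ℝ × ℝ) := {p | ∃ ε > 0, ball p ε ∩ unitSq ⊆ B} with hV₁def
  set V₂ : Set (ℝ × ℝ) := {p | ∃ ε > 0, ball p ε ∩ B = ∅} with hV₂def
  have hV₁ : IsOpen V₁ := by
    rw [Metric.isOpen_iff]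
    rintro p ⟨ε, hε, hs⟩
    refine ⟨ε / 2, by linarith, fun q hq => ⟨ε / 2, by linarith, fun r hr => hs ⟨?_, hr.2⟩⟩⟩
    have h1 : dist r q < ε / 2 := hr.1
    have h2 : dist q p < ε / 2 := hq
    calc dist r p ≤ dist r q + dist q p := dist_triangle _ _ _
      _ < ε := by linarith
  have hV₂ : IsOpen V₂ := by
    rw [Metric.isOpen_iff]
    rintro p ⟨ε, hε, hs⟩
    refine ⟨ε / 2, by linarith, fun q hq => ⟨ε / 2, by linarith, ?_⟩⟩
    rw [Set.eq_empty_iff_forall_notMem]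
    rintro r ⟨hr1, hr2⟩
    have : r ∈ ball p ε ∩ B := by
      refine ⟨?_, hr2⟩
      have h1 : dist r q < ε / 2 := hr1
      have h2 : dist q p < ε / 2 := hq
      calc dist r p ≤ dist r q + dist q p := dist_triangle _ _ _
        _ < ε := by linarith
    rw [hs] at this
    exact this
  have hcover : unitSq ⊆ V₁ ∪ V₂ := by
    intro z hzQ
    by_cases hzK : z ∈ K
    · right
      have hzc : z ∉ closure B := fun hc => by
        have : z ∈ closure B ∩ K := ⟨hc, hzK⟩
        rw [hne] at this; exact this
      obtain ⟨ε, hε, hball⟩ := Metric.isOpen_iff.mp isClosed_closure.isOpen_compl z hzc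
      refine ⟨ε, hε, Set.eq_empty_iff_forall_notMem.mpr ?_⟩
      rintro r ⟨hr1, hr2⟩
      exact hball hr1 (subset_closure hr2)
    · obtain ⟨ε, hε, hsub⟩ := ball_subset_comp h ⟨hzQ, hzK⟩
      by_cases hcz : connectedComponentIn (unitSq \ K) z = B
      · left; exact ⟨ε, hε, by rw [← hcz]; exact hsub⟩
      · right
        refine ⟨ε, hε, Set.eq_empty_iff_forall_notMem.mpr ?_⟩
        rintro w ⟨hw1, hw2⟩
        have hwQ : w ∈ unitSq := ((connectedComponentIn_subset _ _) hw2).1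
        have hw : w ∈ connectedComponentIn (unitSq \ K) z := hsub ⟨hw1, hwQ⟩
        exact hcz ((connectedComponentIn_eq hw).trans (connectedComponentIn_eq hw2).symm)
  have h00Q : ((0:ℝ), (0:ℝ)) ∈ unitSq := ⟨⟨le_refl 0, zero_le_one⟩, le_refl 0, zero_le_one⟩
  have h01Q : ((0:ℝ), (1:ℝ)) ∈ unitSq := ⟨⟨le_refl 0, zero_le_one⟩, zero_le_one, le_refl 1⟩
  have hne1 : (unitSq ∩ V₁).Nonempty := by
    obtain ⟨ε, hε, hsub⟩ := ball_subset_comp h (bot_mem h ⟨le_refl 0, zero_le_one⟩)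
    exact ⟨(0, 0), h00Q, ε, hε, hsub⟩
  have hne2 : (unitSq ∩ V₂).Nonempty := by
    obtain ⟨ε, hε, hsub⟩ := ball_subset_comp h (top_mem h ⟨le_refl 0, zero_le_one⟩)
    refine ⟨(0, 1), h01Q, ε, hε, Set.eq_empty_iff_forall_notMem.mpr ?_⟩
    rintro w ⟨hw1, hw2⟩
    have hwQ : w ∈ unitSq := ((connectedComponentIn_subset _ _) hw2).1
    have hw : w ∈ connectedComponentIn (unitSq \ K) ((0:ℝ), (1:ℝ)) := hsub ⟨hw1, hwQ⟩
    exact comp_ne h ((connectedComponentIn_eq hw2).trans (connectedComponentIn_eq hw).symm)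
  obtain ⟨p, hpQ, hp1, hp2⟩ := isPreconnected_unitSq V₁ V₂ hV₁ hV₂ hcover hne1 hne2
  obtain ⟨ε₁, hε₁, hs₁⟩ := hp1
  obtain ⟨ε₂, hε₂, hs₂⟩ := hp2
  have hpB : p ∈ B := hs₁ ⟨mem_ball_self hε₁, hpQ⟩
  have : p ∈ ball p ε₂ ∩ B := ⟨mem_ball_self hε₂, hpB⟩
  rw [hs₂] at this
  exact this

/-- If `K₁`, `K₂` are disjoint continua crossing `Q` horizontally and for some
`x ∈ [0,1]` the maximal height of `K₁` over `{x} × [0,1]` is less than that of `K₂`, then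
`K₂` is contained in the connected component of `Q ∖ K₁` containing the top side, and the
same height inequality holds for every `x' ∈ [0,1]`. -/
theorem crossing_continua_nested_of_maxHt_lt
    (K₁ K₂ : Set (ℝ × ℝ))
    (h₁ : CrossesHorizontally K₁) (h₂ : CrossesHorizontally K₂)
    (hd : Disjoint K₁ K₂)
    (x : ℝ) (hx : x ∈ Icc (0:ℝ) 1)
    (hlt : maxHt K₁ x < maxHt K₂ x) :
    K₂ ⊆ connectedComponentIn (unitSq \ K₁) ((0:ℝ), (1:ℝ)) ∧
    ∀ x' ∈ Icc (0:ℝ) 1, maxHt K₁ x' < maxHt K₂ x' := by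
  have hK₂sub : K₂ ⊆ unitSq \ K₁ := fun p hp =>
    ⟨h₂.2.2.1 hp, fun h' => Set.disjoint_left.mp hd h' hp⟩
  have hK₁sub : K₁ ⊆ unitSq \ K₂ := fun p hp =>
    ⟨h₁.2.2.1 hp, fun h' => Set.disjoint_left.mp hd hp h'⟩
  have hpt : (x, maxHt K₂ x) ∈ connectedComponentIn (unitSq \ K₁) ((0:ℝ), (1:ℝ)) :=
    mem_topComp h₁ hx hlt (maxHt_le_one h₂ hx)
  have hpart1 : K₂ ⊆ connectedComponentIn (unitSq \ K₁) ((0:ℝ), (1:ℝ)) := by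
    have hK2conn := h₂.2.1.isPreconnected.subset_connectedComponentIn (maxHt_mem h₂ hx) hK₂sub
    rwa [connectedComponentIn_eq hpt]
  refine ⟨hpart1, ?_⟩
  -- bottom component of Q \ K₁
  set B := connectedComponentIn (unitSq \ K₁) ((0:ℝ), (0:ℝ)) with hBdef
  have h00 : ((0:ℝ), (0:ℝ)) ∈ unitSq \ K₁ := bot_mem h₁ ⟨le_refl 0, zero_le_one⟩
  have hBK₂ : ∀ p ∈ B, p ∉ K₂ := by
    intro p hpB hpK₂
    have hpTop : p ∈ connectedComponentIn (unitSq \ K₁) ((0:ℝ), (1:ℝ)) := hpart1 hpK₂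
    exact comp_ne h₁ ((connectedComponentIn_eq hpB).trans (connectedComponentIn_eq hpTop).symm)
  have hclsub := closure_comp_subset h₁ (z₀ := ((0:ℝ), (0:ℝ)))
  obtain ⟨q, hqcl, hqK⟩ := closure_meets h₁
  have hBconn : IsConnected (closure B) :=
    (isConnected_connectedComponentIn_iff.mpr h00).closure
  have hDconn : IsConnected (closure B ∪ K₁) :=
    hBconn.union ⟨q, hqcl, hqK⟩ h₁.2.1
  have hDsub : closure B ∪ K₁ ⊆ unitSq \ K₂ := by
    rintro p (hp | hp)
    · have hpQ : p ∈ unitSq :=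
        closure_minimal ((connectedComponentIn_subset _ _).trans diff_subset) isClosed_unitSq hp
      rcases hclsub hp with hpB | hpK₁
      · exact ⟨hpQ, hBK₂ p hpB⟩
      · exact hK₁sub hpK₁
    · exact hK₁sub hp
  have hD00 : ((0:ℝ), (0:ℝ)) ∈ closure B ∪ K₁ :=
    Or.inl (subset_closure (mem_connectedComponentIn h00))
  have hK₁B₂ : K₁ ⊆ connectedComponentIn (unitSq \ K₂) ((0:ℝ), (0:ℝ)) := fun p hp =>
    hDconn.isPreconnected.subset_connectedComponentIn hD00 hDsub (Or.inr hp)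
  intro x' hx'
  by_contra hcon
  push_neg at hcon
  rcases lt_or_eq_of_le hcon with hlt2 | heq
  · have hpTop : (x', maxHt K₁ x') ∈ connectedComponentIn (unitSq \ K₂) ((0:ℝ), (1:ℝ)) :=
      mem_topComp h₂ hx' hlt2 (maxHt_le_one h₁ hx')
    have hpBot : (x', maxHt K₁ x') ∈ connectedComponentIn (unitSq \ K₂) ((0:ℝ), (0:ℝ)) :=
      hK₁B₂ (maxHt_mem h₁ hx')
    exact comp_ne h₂
      ((connectedComponentIn_eq hpBot).trans (connectedComponentIn_eq hpTop).symm)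
  · have h2 : (x', maxHt K₂ x') ∈ K₂ := maxHt_mem h₂ hx'
    rw [heq] at h2
    exact Set.disjoint_left.mp hd (maxHt_mem h₁ hx') h2
end

section
/- Let {K_m} be a sequence of pairwise disjoint frontiers in an annulus A that is monotone with respect to the order K ≤ K' iff K⁻ ⊂ K'⁻ (where K⁻ is the lower complementary annular component), and suppose K_m converges in the Hausdorff metric to a compact set K. Then K has empty interior; indeed if the sequence is increasing, K = ∂(⋃_m K_m⁻). -/
open Set Topology Filter

noncomputable section

/-- The circle `ℝ/ℤ`. -/
abbrev Circ : Type := AddCircle (1 : ℝ)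

/-- The open annulus `S¹ × ℝ`. -/
abbrev Ann : Type := Circ × ℝ

/-- The standard closed annulus `S¹ × [0,1]` inside `Ann`. -/
def stdA : Set Ann := {p | p.2 ∈ Icc (0:ℝ) 1}

/-- The lower boundary circle of the standard closed annulus. -/
def bdLow : Set Ann := {p | p.2 = 0}

/-- The upper boundary circle of the standard closed annulus. -/
def bdHigh : Set Ann := {p | p.2 = 1}

/-- The half-open model annulus `S¹ × [0,1)`. -/
def halfOpenAnn : Set Ann := {p | p.2 ∈ Ico (0:ℝ) 1}

/-- `W` has exactly two connected components, `Km` and `Kp`. -/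
def TwoComponents (W Km Kp : Set Ann) : Prop :=
  Km ≠ Kp ∧ Km ∪ Kp = W ∧
  (∃ x ∈ W, connectedComponentIn W x = Km) ∧
  (∃ x ∈ W, connectedComponentIn W x = Kp) ∧
  ∀ x ∈ W, connectedComponentIn W x = Km ∨ connectedComponentIn W x = Kp

/-- `K` is an annular continuum in the standard closed annulus, with complementary
pieces `Km` (containing the lower boundary) and `Kp` (containing the upper boundary),
each homeomorphic to a (half-open) annulus. -/
def AnnularContinuum (K Km Kp : Set Ann) : Prop :=
  IsCompact K ∧ IsConnected K ∧ K ⊆ stdA ∧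
  TwoComponents (stdA \ K) Km Kp ∧
  bdLow ⊆ Km ∧ bdHigh ⊆ Kp ∧
  Nonempty (↥Km ≃ₜ ↥halfOpenAnn) ∧ Nonempty (↥Kp ≃ₜ ↥halfOpenAnn)

/-- The boundary in the standard closed annulus of a relatively open subset. -/
def relBd (E : Set Ann) : Set Ann := closure E \ E

/-- `K` is a frontier: an annular continuum which coincides with the boundary of each of
its two complementary pieces. -/
def IsFrontierSet (K : Set Ann) : Prop :=
  ∃ Km Kp, AnnularContinuum K Km Kp ∧ K = relBd Km ∧ K = relBd Kp

/-! ### Auxiliary lemmas -/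

lemma stdA_closed : IsClosed stdA := isClosed_Icc.preimage continuous_snd

lemma circ_rep (v : Circ) : ∃ d : ℝ, (d : Circ) = v ∧ |d| = ‖v‖ := by
  obtain ⟨r, rfl⟩ := Quotient.exists_rep v
  have hcoe : ((r : ℝ) : Circ) = Quotient.mk _ r := rfl
  refine ⟨r - round r, ?_, ?_⟩
  · rw [← hcoe, AddCircle.coe_sub, sub_eq_self, AddCircle.coe_eq_zero_iff]
    exact ⟨round r, by simp⟩
  · rw [← hcoe, AddCircle.norm_eq]; norm_num

/-- A connected set inside `stdA` joining two nearby points of `stdA`, staying close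
to the first point. -/
lemma path_lemma (x z : Ann) (hx : x ∈ stdA) (hz : z ∈ stdA) {ε : ℝ}
    (hd : dist z x < ε) :
    ∃ C : Set Ann, IsPreconnected C ∧ x ∈ C ∧ z ∈ C ∧ C ⊆ stdA ∧ ∀ w ∈ C, dist w x < ε := by
  obtain ⟨d, hdv, hdn⟩ := circ_rep (z.1 - x.1)
  rw [Prod.dist_eq] at hd
  have h1 : dist z.1 x.1 < ε := lt_of_le_of_lt (le_max_left _ _) hd
  have h2 : dist z.2 x.2 < ε := lt_of_le_of_lt (le_max_right _ _) hd
  have hdabs : |d| < ε := by rwa [hdn, ← dist_eq_norm]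
  set γ : ℝ → Ann := fun t => ((x.1 + ((t * d : ℝ) : Circ), x.2 + t * (z.2 - x.2)) : Ann) with hγ
  have hc : Continuous (fun t : ℝ => ((t * d : ℝ) : Circ)) :=
    (AddCircle.continuous_mk' 1).comp (continuous_id.mul continuous_const)
  have hcont : Continuous γ :=
    (continuous_const.add hc).prodMk (continuous_const.add (continuous_id.mul continuous_const))
  refine ⟨γ '' Icc 0 1, isPreconnected_Icc.image γ hcont.continuousOn,
    ⟨0, ⟨le_refl _, zero_le_one⟩, ?_⟩, ⟨1, ⟨zero_le_one, le_refl _⟩, ?_⟩, ?_, ?_⟩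
  · show (x.1 + ((0 * d : ℝ) : Circ), x.2 + 0 * (z.2 - x.2)) = x
    ext <;> simp
  · show (x.1 + ((1 * d : ℝ) : Circ), x.2 + 1 * (z.2 - x.2)) = z
    ext
    · show x.1 + ((1 * d : ℝ) : Circ) = z.1
      rw [one_mul, hdv]; abel
    · show x.2 + 1 * (z.2 - x.2) = z.2
      ring
  · rintro w ⟨t, ht, rfl⟩
    have hx2 := hx
    simp only [stdA, mem_setOf_eq, mem_Icc] at hx2 ⊢
    have hz2 : z.2 ∈ Icc (0:ℝ) 1 := hz
    constructor
    · nlinarith [hx2.1, hx2.2, hz2.1, hz2.2, ht.1, ht.2]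
    · nlinarith [hx2.1, hx2.2, hz2.1, hz2.2, ht.1, ht.2]
  · rintro w ⟨t, ht, rfl⟩
    rw [Prod.dist_eq]
    have ht' : |t| ≤ 1 := by rw [abs_le]; constructor <;> [linarith [ht.1]; exact ht.2]
    refine max_lt ?_ ?_
    · show dist (x.1 + ((t * d : ℝ) : Circ)) x.1 < ε
      rw [dist_eq_norm, add_sub_cancel_left]
      have : ‖((t * d : ℝ) : Circ)‖ = |t * d - round ((1:ℝ)⁻¹ * (t*d)) * 1| := AddCircle.norm_eq 1
      rw [this]
      simp only [inv_one, one_mul, mul_one]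
      calc |t * d - (round (t*d) : ℝ)| ≤ |t * d - ((0:ℤ):ℝ)| := round_le (t*d) 0
        _ = |t| * |d| := by rw [Int.cast_zero, sub_zero, abs_mul]
        _ < ε := by nlinarith [abs_nonneg d, abs_nonneg t]
    · show dist (x.2 + t * (z.2 - x.2)) x.2 < ε
      rw [Real.dist_eq, add_sub_cancel_left, abs_mul]
      have h3 : |z.2 - x.2| = dist z.2 x.2 := by rw [Real.dist_eq]
      nlinarith [abs_nonneg (z.2 - x.2), abs_nonneg t, h3 ▸ h2]

lemma TwoComponents.symm' {W A B : Set Ann} (h : TwoComponents W A B) : TwoComponents W B A :=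
  ⟨h.1.symm, by rw [union_comm]; exact h.2.1, h.2.2.2.1, h.2.2.1,
    fun x hx => (h.2.2.2.2 x hx).symm⟩

lemma twoComp_ccIn {W A B : Set Ann} (h : TwoComponents W A B) {x : Ann} (hx : x ∈ A) :
    connectedComponentIn W x = A := by
  obtain ⟨-, -, ⟨a, haW, haA⟩, -, -⟩ := h
  rw [← haA] at hx
  rw [← connectedComponentIn_eq hx, haA]

lemma twoComp_disj {W A B : Set Ann} (h : TwoComponents W A B) : A ∩ B = ∅ := by
  rw [eq_empty_iff_forall_notMem]
  rintro w ⟨hwA, hwB⟩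
  exact h.1 ((twoComp_ccIn h hwA).symm.trans (twoComp_ccIn h.symm' hwB))

lemma twoComp_preconn {W A B : Set Ann} (h : TwoComponents W A B) : IsPreconnected A := by
  obtain ⟨-, -, ⟨a, haW, haA⟩, -, -⟩ := h
  rw [← haA]; exact isPreconnected_connectedComponentIn

lemma twoComp_closure_inter {W A B : Set Ann} (h : TwoComponents W A B) :
    closure A ∩ W ⊆ A := by
  obtain ⟨-, hun, ⟨a, haW, haA⟩, -, -⟩ := h
  have haA' : a ∈ A := haA ▸ mem_connectedComponentIn haW
  have hsub : A ⊆ W := hun ▸ subset_union_left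
  have hApre : IsPreconnected A := by rw [← haA]; exact isPreconnected_connectedComponentIn
  have hpre : IsPreconnected (closure A ∩ W) :=
    hApre.subset_closure (subset_inter subset_closure hsub) inter_subset_left
  have hsub2 : closure A ∩ W ⊆ connectedComponentIn W a :=
    hpre.subset_connectedComponentIn ⟨subset_closure haA', haW⟩ inter_subset_right
  exact haA ▸ hsub2

lemma twoComp_relOpen {Kk W A B : Set Ann} (hK : IsClosed Kk) (hW : W = stdA \ Kk)
    (h : TwoComponents W A B) : ∃ O, IsOpen O ∧ A = O ∩ stdA := by
  refine ⟨Kkᶜ ∩ (closure B)ᶜ, hK.isOpen_compl.inter isClosed_closure.isOpen_compl, ?_⟩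
  have hBcl : closure B ∩ W ⊆ B := twoComp_closure_inter h.symm'
  have hAB : A ∩ B = ∅ := twoComp_disj h
  have hsubA : A ⊆ W := h.2.1 ▸ subset_union_left
  have hunion : A ∪ B = W := h.2.1
  ext w
  constructor
  · intro hw
    have hwW : w ∈ W := hsubA hw
    rw [hW] at hwW
    refine ⟨⟨hwW.2, fun hcl => ?_⟩, hwW.1⟩
    exact (eq_empty_iff_forall_notMem.mp hAB w) ⟨hw, hBcl ⟨hcl, hW ▸ hwW⟩⟩
  · rintro ⟨⟨hnK, hncl⟩, hstd⟩
    have hwW : w ∈ W := by rw [hW]; exact ⟨hstd, hnK⟩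
    rcases (hunion ▸ hwW : w ∈ A ∪ B) with h1 | h1
    · exact h1
    · exact absurd (subset_closure h1) hncl

lemma disj_closure {A B O : Set Ann} (hO : IsOpen O) (hB : B = O ∩ stdA)
    (hA : A ⊆ stdA) (hAB : A ∩ B = ∅) : B ∩ closure A = ∅ := by
  rw [eq_empty_iff_forall_notMem]
  rintro w ⟨hwB, hwcl⟩
  have hwO : w ∈ O := (hB ▸ hwB).1
  obtain ⟨y, hyO, hyA⟩ := _root_.mem_closure_iff.mp hwcl O hO hwO
  exact (eq_empty_iff_forall_notMem.mp hAB y) ⟨hyA, hB ▸ ⟨hyO, hA hyA⟩⟩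

lemma int_empty {L T : Set Ann} (h1 : L ⊆ closure T) (h2 : L ∩ T = ∅) : interior L = ∅ := by
  rw [eq_empty_iff_forall_notMem]
  intro x hx
  obtain ⟨y, hy1, hy2⟩ := _root_.mem_closure_iff.mp (h1 (interior_subset hx))
    (interior L) isOpen_interior hx
  exact (eq_empty_iff_forall_notMem.mp h2 y) ⟨interior_subset hy1, hy2⟩

lemma limit_lemma (K E : ℕ → Set Ann) (L : Set Ann)
    (hKE : ∀ m, K m ⊆ closure (E m))
    (hEo : ∀ m, ∃ O, IsOpen O ∧ E m = O ∩ stdA)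
    (hKA : ∀ m, K m ⊆ stdA)
    (hdis : ∀ m m', m ≤ m' → K m' ∩ E m = ∅)
    (hlim : Tendsto (fun m => EMetric.hausdorffEdist (K m) L) atTop (𝓝 0)) :
    L ⊆ closure (⋃ m, E m) ∧ L ∩ (⋃ m, E m) = ∅ := by
  have key : ∀ x ∈ L, ∀ ε : ℝ, 0 < ε → ∀ m₀ : ℕ, ∃ m, m₀ ≤ m ∧ ∃ w ∈ K m, dist x w < ε := by
    intro x hx ε hε m₀
    have hev : ∀ᶠ m in atTop, EMetric.hausdorffEdist (K m) L < ENNReal.ofReal ε :=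
      hlim.eventually_lt_const (ENNReal.ofReal_pos.mpr hε)
    obtain ⟨m, hm1, hm2⟩ := ((eventually_ge_atTop m₀).and hev).exists
    have h1 : EMetric.infEdist x (K m) < ENNReal.ofReal ε := by
      refine lt_of_le_of_lt (EMetric.infEdist_le_hausdorffEdist_of_mem hx) ?_
      rwa [EMetric.hausdorffEdist_comm]
    obtain ⟨w, hwK, hw⟩ := EMetric.infEdist_lt_iff.mp h1
    exact ⟨m, hm1, w, hwK, edist_lt_ofReal.mp hw⟩
  constructor
  · intro x hx
    rw [Metric.mem_closure_iff]
    intro ε hε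
    obtain ⟨m, -, w, hwK, hw⟩ := key x hx (ε/2) (by positivity) 0
    obtain ⟨y, hy, hy2⟩ := Metric.mem_closure_iff.mp (hKE m hwK) (ε/2) (by positivity)
    refine ⟨y, mem_iUnion.mpr ⟨m, hy⟩, ?_⟩
    calc dist x y ≤ dist x w + dist w y := dist_triangle _ _ _
      _ < ε := by linarith
  · rw [eq_empty_iff_forall_notMem]
    rintro x ⟨hxL, hxU⟩
    obtain ⟨m₀, hxE⟩ := mem_iUnion.mp hxU
    obtain ⟨O, hO, hOE⟩ := hEo m₀
    have hxO : x ∈ O := (hOE ▸ hxE).1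
    obtain ⟨ε, hε, hball⟩ := Metric.isOpen_iff.mp hO x hxO
    obtain ⟨m, hm₀m, w, hwK, hw⟩ := key x hxL ε hε m₀
    have hwO : w ∈ O := hball (by rwa [Metric.mem_ball, dist_comm])
    have hwE : w ∈ E m₀ := hOE ▸ ⟨hwO, hKA m hwK⟩
    exact (eq_empty_iff_forall_notMem.mp (hdis m₀ m hm₀m) w) ⟨hwK, hwE⟩

/-- Let `K m` be a sequence of pairwise disjoint frontiers in the annulus,
monotone for the order `K ≤ K'` iff `K⁻ ⊆ K'⁻`, converging in the Hausdorff metric to a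
compact set `L`. Then `L` has empty interior; indeed if the sequence is increasing, `L` is
the boundary (in the annulus) of `⋃ m, (K m)⁻`. -/
theorem hausdorff_limit_of_monotone_frontiers_empty_interior
    (K Km Kp : ℕ → Set Ann)
    (hfr : ∀ m, AnnularContinuum (K m) (Km m) (Kp m) ∧
      K m = relBd (Km m) ∧ K m = relBd (Kp m))
    (hdisj : Pairwise (Function.onFun Disjoint K))
    (hmono : Monotone Km ∨ Antitone Km)
    (L : Set Ann) (hLc : IsCompact L)
    (hlim : Tendsto (fun m => EMetric.hausdorffEdist (K m) L) atTop (𝓝 0)) :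
    interior L = ∅ ∧ (Monotone Km → L = relBd (⋃ m, Km m)) := by
  have hKrm : ∀ m, K m = closure (Km m) \ Km m := fun m => (hfr m).2.1
  have hKrp : ∀ m, K m = closure (Kp m) \ Kp m := fun m => (hfr m).2.2
  have hKc : ∀ m, IsCompact (K m) := fun m => (hfr m).1.1
  have hKA : ∀ m, K m ⊆ stdA := fun m => (hfr m).1.2.2.1
  have hTC : ∀ m, TwoComponents (stdA \ K m) (Km m) (Kp m) := fun m => (hfr m).1.2.2.2.1
  have hbdH : ∀ m, bdHigh ⊆ Kp m := fun m => (hfr m).1.2.2.2.2.2.1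
  have hWdef : ∀ m, Km m ∪ Kp m = stdA \ K m := fun m => (hTC m).2.1
  have hmpd : ∀ m, Km m ∩ Kp m = ∅ := fun m => twoComp_disj (hTC m)
  have hKmA : ∀ m, Km m ⊆ stdA := fun m =>
    (((hWdef m) ▸ subset_union_left : Km m ⊆ stdA \ K m)).trans diff_subset
  have hKpA : ∀ m, Kp m ⊆ stdA := fun m =>
    (((hWdef m) ▸ subset_union_right : Kp m ⊆ stdA \ K m)).trans diff_subset
  have hOm : ∀ m, ∃ O, IsOpen O ∧ Km m = O ∩ stdA := fun m =>
    twoComp_relOpen (hKc m).isClosed rfl (hTC m)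
  have hOp : ∀ m, ∃ O, IsOpen O ∧ Kp m = O ∩ stdA := fun m =>
    twoComp_relOpen (hKc m).isClosed rfl (hTC m).symm'
  have hclp : ∀ m, Kp m ∩ closure (Km m) = ∅ := fun m => by
    obtain ⟨O, hO1, hO2⟩ := hOp m
    exact disj_closure hO1 hO2 (hKmA m) (hmpd m)
  have hccp : ∀ m, ∀ x ∈ Kp m, connectedComponentIn (stdA \ K m) x = Kp m :=
    fun m x hx => twoComp_ccIn (hTC m).symm' hx
  -- the key equality, valid whenever Km is monotone
  have keyMain : Monotone Km →
      (L ⊆ closure (⋃ m, Km m) ∧ L ∩ (⋃ m, Km m) = ∅) ∧ L = relBd (⋃ m, Km m) := by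
    intro hm
    have hlimA : L ⊆ closure (⋃ m, Km m) ∧ L ∩ (⋃ m, Km m) = ∅ := by
      refine limit_lemma K Km L ?_ hOm hKA ?_ hlim
      · intro m w hw; rw [hKrm m] at hw; exact hw.1
      · intro m m' hmm'
        rw [eq_empty_iff_forall_notMem]
        rintro w ⟨hwK, hwE⟩
        rw [hKrm m'] at hwK
        exact hwK.2 (hm hmm' hwE)
    refine ⟨hlimA, ?_⟩
    have hchain : ∀ {m m' : ℕ}, m < m' → K m ⊆ Km m' := by
      intro m m' hmm' w hw
      have h1 : w ∈ closure (Km m') := by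
        have hw1 : w ∈ closure (Km m) := by rw [hKrm m] at hw; exact hw.1
        exact closure_mono (hm hmm'.le) hw1
      have h2 : w ∉ Kp m' := fun hp =>
        (eq_empty_iff_forall_notMem.mp (hclp m') w) ⟨hp, h1⟩
      have h3 : w ∉ K m' := fun hk => (hdisj hmm'.ne).ne_of_mem hw hk rfl
      have h4 : w ∈ Km m' ∪ Kp m' := by rw [hWdef m']; exact ⟨hKA m hw, h3⟩
      exact h4.resolve_right h2
    refine Subset.antisymm ?_ ?_
    · intro x hx
      exact ⟨hlimA.1 hx, fun hU => (eq_empty_iff_forall_notMem.mp hlimA.2 x) ⟨hx, hU⟩⟩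
    · rintro x ⟨hxcl, hxU⟩
      have hxA : x ∈ stdA := stdA_closed.closure_subset_iff.mpr
        (iUnion_subset fun m => hKmA m) hxcl
      have hxKp : ∀ m, x ∈ Kp m := by
        intro m
        have hxnotKm : x ∉ Km m := fun h => hxU (mem_iUnion.mpr ⟨m, h⟩)
        have hxnotK : x ∉ K m := fun h =>
          hxU (mem_iUnion.mpr ⟨m + 1, hchain (Nat.lt_succ_self m) h⟩)
        have h4 : x ∈ Km m ∪ Kp m := by rw [hWdef m]; exact ⟨hxA, hxnotK⟩
        exact h4.resolve_left hxnotKm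
      rw [EMetric.mem_iff_infEdist_zero_of_closed hLc.isClosed]
      refine nonpos_iff_eq_zero.mp (ENNReal.le_of_forall_pos_le_add ?_)
      intro ε hε _
      rw [zero_add]
      set ε' : ℝ := (ε : ℝ) / 2 with hε'def
      have hε' : 0 < ε' := by positivity
      have hev : ∀ᶠ m in atTop, EMetric.hausdorffEdist (K m) L < ENNReal.ofReal ε' :=
        hlim.eventually_lt_const (ENNReal.ofReal_pos.mpr hε')
      obtain ⟨M, hM⟩ := eventually_atTop.mp hev
      obtain ⟨z, hzU, hxz⟩ := Metric.mem_closure_iff.mp hxcl ε' hε'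
      obtain ⟨m₁, hzKm₁⟩ := mem_iUnion.mp hzU
      set m := max M m₁ with hmdef
      have hzKm : z ∈ Km m := hm (le_max_right _ _) hzKm₁
      obtain ⟨C, hC1, hxC, hzC, hC4, hC5⟩ :=
        path_lemma x z hxA (hKmA m₁ hzKm₁) (show dist z x < ε' by rwa [dist_comm])
      rcases (C ∩ K m).eq_empty_or_nonempty with hCK | hCK
      · exfalso
        have hCW : C ⊆ stdA \ K m := fun w hw =>
          ⟨hC4 hw, fun hK => (eq_empty_iff_forall_notMem.mp hCK w) ⟨hw, hK⟩⟩
        have hsub := hC1.subset_connectedComponentIn hxC hCW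
        rw [hccp m x (hxKp m)] at hsub
        exact (eq_empty_iff_forall_notMem.mp (hmpd m) z) ⟨hzKm, hsub hzC⟩
      · obtain ⟨w, hwC, hwK⟩ := hCK
        calc EMetric.infEdist x L
            ≤ EMetric.infEdist x (K m) + EMetric.hausdorffEdist (K m) L :=
              EMetric.infEdist_le_infEdist_add_hausdorffEdist
          _ ≤ edist x w + EMetric.hausdorffEdist (K m) L :=
              add_le_add_left (EMetric.infEdist_le_edist_of_mem hwK) _
          _ ≤ ENNReal.ofReal ε' + ENNReal.ofReal ε' := by
              refine add_le_add (le_of_lt (edist_lt_ofReal.mpr ?_))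
                (le_of_lt (hM m (le_max_left _ _)))
              rw [dist_comm]; exact hC5 w hwC
          _ = ENNReal.ofReal (ε' + ε') := (ENNReal.ofReal_add hε'.le hε'.le).symm
          _ = (ε : ENNReal) := by
              rw [show ε' + ε' = ((ε : ℝ)) by rw [hε'def]; ring]
              exact ENNReal.ofReal_coe_nnreal
  constructor
  · rcases hmono with hm | hanti
    · exact int_empty ((keyMain hm).1).1 ((keyMain hm).1).2
    · -- antitone case: use the upper components
      have hKpMono : Monotone Kp := by
        intro m n hmn
        have hKppre : IsPreconnected (Kp m) := twoComp_preconn (hTC m).symm'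
        have hKn_sub : K n ⊆ closure (Km m) := by
          intro w hw; rw [hKrm n] at hw; exact closure_mono (hanti hmn) hw.1
        have hsub : Kp m ⊆ stdA \ K n := fun w hw =>
          ⟨hKpA m hw, fun hK => (eq_empty_iff_forall_notMem.mp (hclp m) w) ⟨hw, hKn_sub hK⟩⟩
        have hb : ((0 : Circ), (1 : ℝ)) ∈ Kp m := hbdH m rfl
        have hsub2 := hKppre.subset_connectedComponentIn hb hsub
        rwa [hccp n _ (hbdH n rfl)] at hsub2
      have hlimB : L ⊆ closure (⋃ m, Kp m) ∧ L ∩ (⋃ m, Kp m) = ∅ := by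
        refine limit_lemma K Kp L ?_ hOp hKA ?_ hlim
        · intro m w hw; rw [hKrp m] at hw; exact hw.1
        · intro m m' hmm'
          rw [eq_empty_iff_forall_notMem]
          rintro w ⟨hwK, hwE⟩
          rw [hKrp m'] at hwK
          exact hwK.2 (hKpMono hmm' hwE)
      exact int_empty hlimB.1 hlimB.2
  · exact fun hm => (keyMain hm).2
end
end
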